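/- Let a, t be rational numbers with t ≠ 0 and t¹⁰a⁴ − 2t⁵a³ − t⁵ + a² ≠ 0, and set A₂ = −t⁵(2t⁵a³ + t⁵ − 2a²) / (t¹⁰a⁴ − 2t⁵a³ − t⁵ + a²). Then there exists a rational number v such that v² = 4t⁵A₂⁴ − 4t¹⁰A₂³ + 4t⁵aA₂² − 4t¹⁰aA₂ + t¹⁰. -/

import Mathlib

theorem stmt_16 (a t : ℚ) (ht : t ≠ 0)
    (h : t ^ 10 * a ^ 4 - 2 * t ^ 5 * a ^ 3 - t ^ 5 + a ^ 2 ≠ 0)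
    (A₂ : ℚ)
    (hA : A₂ = -t ^ 5 * (2 * t ^ 5 * a ^ 3 + t ^ 5 - 2 * a ^ 2) /
      (t ^ 10 * a ^ 4 - 2 * t ^ 5 * a ^ 3 - t ^ 5 + a ^ 2)) :
    ∃ v : ℚ, v ^ 2 = 4 * t ^ 5 * A₂ ^ 4 - 4 * t ^ 10 * A₂ ^ 3 + 4 * t ^ 5 * a * A₂ ^ 2 -
      4 * t ^ 10 * a * A₂ + t ^ 10 := by
  refine ⟨(3 * a ^ 8 * t ^ 25 - 8 * a ^ 7 * t ^ 20 + 6 * a ^ 6 * t ^ 15 + 6 * a ^ 5 * t ^ 25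
      - 6 * a ^ 4 * t ^ 20 - a ^ 4 * t ^ 5 - 2 * a ^ 3 * t ^ 15 + 2 * a ^ 2 * t ^ 25
      + 2 * a ^ 2 * t ^ 10 - t ^ 15) /
      (t ^ 10 * a ^ 4 - 2 * t ^ 5 * a ^ 3 - t ^ 5 + a ^ 2) ^ 2, ?_⟩
  subst hA
  generalize hD : t ^ 10 * a ^ 4 - 2 * t ^ 5 * a ^ 3 - t ^ 5 + a ^ 2 = D at h ⊢
  field_simp
  rw [← hD]
  ring
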